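/- Let G be a finite undirected simple graph, let u and v be distinct non-adjacent vertices with k_G(u) = k_G(v), and let G' = G + (u,v) be the graph obtained by inserting the edge (u,v). If w is any vertex whose coreness changes after the insertion, i.e., k_{G'}(w) ≠ k_G(w), then w is k-reachable from u or from v in the original graph G with k = k_G(u) = k_G(v): there is a path in G from u to w, or from v to w, all of whose vertices (including the endpoints) have G-coreness equal to k_G(u). -/

import Mathlib

/-- Degree of `u` in the subgraph of `G` induced by the vertex set `C`. -/
noncomputable def degOn {V : Type*} (G : SimpleGraph V) (C : Set V) (u : V) : ℕ :=
  {v ∈ C | G.Adj u v}.ncard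

/-- The coreness of a vertex `u`: the largest `k` such that `u` belongs to some set `C`
all of whose vertices have degree at least `k` in the subgraph induced by `C`. -/
noncomputable def coreness {V : Type*} (G : SimpleGraph V) (u : V) : ℕ :=
  sSup {k : ℕ | ∃ C : Set V, u ∈ C ∧ ∀ w ∈ C, k ≤ degOn G C w}

section Aux
variable {V : Type*} [Fintype V]

lemma degOn_mono_set (G : SimpleGraph V) {C D : Set V} (h : C ⊆ D) (u : V) :
    degOn G C u ≤ degOn G D u :=
  Set.ncard_le_ncard (fun y hy => ⟨h hy.1, hy.2⟩) (Set.toFinite _)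

lemma degOn_le_card (G : SimpleGraph V) (C : Set V) (u : V) :
    degOn G C u ≤ Fintype.card V := by
  calc degOn G C u ≤ (Set.univ : Set V).ncard :=
        Set.ncard_le_ncard (fun y _ => trivial) (Set.toFinite _)
    _ = Fintype.card V := by rw [Set.ncard_univ, Nat.card_eq_fintype_card]

lemma corenessSet_bdd (G : SimpleGraph V) (u : V) :
    BddAbove {k : ℕ | ∃ C : Set V, u ∈ C ∧ ∀ w ∈ C, k ≤ degOn G C w} :=
  ⟨Fintype.card V, fun k ⟨C, huC, h⟩ => (h u huC).trans (degOn_le_card G C u)⟩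

lemma coreness_witness (G : SimpleGraph V) (u : V) :
    ∃ C : Set V, u ∈ C ∧ ∀ w ∈ C, coreness G u ≤ degOn G C w := by
  have hne : {k : ℕ | ∃ C : Set V, u ∈ C ∧ ∀ w ∈ C, k ≤ degOn G C w}.Nonempty :=
    ⟨0, Set.univ, trivial, fun _ _ => Nat.zero_le _⟩
  exact Nat.sSup_mem hne (corenessSet_bdd G u)

lemma le_coreness (G : SimpleGraph V) (u : V) {k : ℕ} {C : Set V}
    (hu : u ∈ C) (h : ∀ x ∈ C, k ≤ degOn G C x) : k ≤ coreness G u :=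
  le_csSup (corenessSet_bdd G u) ⟨C, hu, h⟩

end Aux

/-- If the edge `(u,v)` with `k_G(u) = k_G(v)` is inserted, then every vertex `w` whose
coreness changes is `k`-reachable from `u` or from `v` in the original graph `G` with
`k = k_G(u) = k_G(v)`: there is a path in `G` from `u` to `w`, or from `v` to `w`, all
of whose vertices have coreness `k_G(u)`. -/
theorem candidate_of_insert_eq {V : Type*} [Fintype V] (G G' : SimpleGraph V)
    (u v : V) (huv : u ≠ v) (hna : ¬ G.Adj u v)
    (hG' : ∀ a b, G'.Adj a b ↔ G.Adj a b ∨ (a = u ∧ b = v) ∨ (a = v ∧ b = u))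
    (hk : coreness G u = coreness G v)
    (w : V) (hw : coreness G' w ≠ coreness G w) :
    (∃ p : G.Walk u w, p.IsPath ∧ ∀ x ∈ p.support, coreness G x = coreness G u) ∨
    (∃ p : G.Walk v w, p.IsPath ∧ ∀ x ∈ p.support, coreness G x = coreness G u) := by

  classical
  set m := coreness G w with hm
  -- monotonicity: coreness G w ≤ coreness G' w
  have hsub : ∀ a b, G.Adj a b → G'.Adj a b := fun a b h => (hG' a b).2 (Or.inl h)
  have hmono : m ≤ coreness G' w := by
    obtain ⟨C, hwC, hC⟩ := coreness_witness G w
    refine le_coreness G' w hwC (fun x hx => (hC x hx).trans ?_)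
    exact Set.ncard_le_ncard (fun y hy => ⟨hy.1, hsub _ _ hy.2⟩) (Set.toFinite _)
  have hm1 : m + 1 ≤ coreness G' w := lt_of_le_of_ne hmono (Ne.symm hw)
  -- witness for w in G'
  obtain ⟨C, hwC, hC⟩ := coreness_witness G' w
  have hC1 : ∀ x ∈ C, m + 1 ≤ degOn G' C x := fun x hx => hm1.trans (hC x hx)
  -- F1 : away from u, v the degrees agree
  have F1 : ∀ x, x ≠ u → x ≠ v → degOn G' C x = degOn G C x := by
    intro x hxu hxv
    unfold degOn
    congr 1
    ext y
    simp only [Set.mem_setOf_eq, hG']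
    constructor
    · rintro ⟨hyC, h | ⟨h1, h2⟩ | ⟨h1, h2⟩⟩
      · exact ⟨hyC, h⟩
      · exact absurd h1 hxu
      · exact absurd h1 hxv
    · rintro ⟨hyC, h⟩; exact ⟨hyC, Or.inl h⟩
  -- F2 : at u and v the degree changes by at most one
  have F2 : ∀ x y, x = u ∧ y = v ∨ x = v ∧ y = u →
      degOn G' C x ≤ degOn G C x + 1 := by
    rintro x y hxy
    have hsub2 : {z ∈ C | G'.Adj x z} ⊆ {z ∈ C | G.Adj x z} ∪ {y} := by
      rintro z ⟨hzC, hz⟩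
      rcases (hG' x z).1 hz with h | ⟨h1, h2⟩ | ⟨h1, h2⟩
      · exact Or.inl ⟨hzC, h⟩
      · rcases hxy with ⟨hx, hy⟩ | ⟨hx, hy⟩
        · exact Or.inr (by simp [h2, hy])
        · exact absurd (h1.symm.trans hx) huv
      · rcases hxy with ⟨hx, hy⟩ | ⟨hx, hy⟩
        · exact absurd (hx.symm.trans h1) huv
        · exact Or.inr (by simp [h2, hy])
    calc degOn G' C x ≤ ({z ∈ C | G.Adj x z} ∪ {y}).ncard :=
          Set.ncard_le_ncard hsub2 (Set.toFinite _)
      _ ≤ {z ∈ C | G.Adj x z}.ncard + ({y} : Set V).ncard := Set.ncard_union_le _ _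
      _ = degOn G C x + 1 := by rw [Set.ncard_singleton]; rfl
  -- F3 : in G every vertex of C has degree ≥ m on C
  have F3 : ∀ x ∈ C, m ≤ degOn G C x := by
    intro x hx
    by_cases hxu : x = u
    · have := (hC1 x hx).trans (F2 x v (Or.inl ⟨hxu, rfl⟩)); omega
    by_cases hxv : x = v
    · have := (hC1 x hx).trans (F2 x u (Or.inr ⟨hxv, rfl⟩)); omega
    · have := hC1 x hx; rw [F1 x hxu hxv] at this; omega
  have F4 : ∀ x ∈ C, m ≤ coreness G x := fun x hx => le_coreness G x hx F3
  -- the reachable set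
  set A : Set V := {x | ∃ q : G.Walk w x, ∀ y ∈ q.support, coreness G y = m} with hA
  have hwA : w ∈ A := ⟨SimpleGraph.Walk.nil, by simp [hm]⟩
  have key : u ∈ A ∨ v ∈ A := by
    by_contra hcon
    push_neg at hcon
    obtain ⟨huA, hvA⟩ := hcon
    set K : Set V := {x | m + 1 ≤ coreness G x} with hK
    have KLem : ∀ x ∈ K, m + 1 ≤ degOn G K x := by
      intro x hx
      obtain ⟨Cx, hxCx, hCx⟩ := coreness_witness G x
      have hCxK : Cx ⊆ K := by
        intro y hy
        exact (hx.trans (le_coreness G y hy (fun z hz => hCx z hz))).trans_eq rfl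
      exact (hx.trans (hCx x hxCx)).trans (degOn_mono_set G hCxK x)
    set T : Set V := (C ∩ A) ∪ K with hT
    have TLem : ∀ x ∈ T, m + 1 ≤ degOn G T x := by
      rintro x (⟨hxC, hxA⟩ | hxK)
      · have hxu : x ≠ u := fun h => huA (h ▸ hxA)
        have hxv : x ≠ v := fun h => hvA (h ▸ hxA)
        have hdeg : m + 1 ≤ degOn G C x := by
          have := hC1 x hxC; rwa [F1 x hxu hxv] at this
        refine hdeg.trans (Set.ncard_le_ncard ?_ (Set.toFinite _))
        rintro y ⟨hyC, hadj⟩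
        refine ⟨?_, hadj⟩
        by_cases hy1 : m + 1 ≤ coreness G y
        · exact Or.inr hy1
        · have hym : coreness G y = m := le_antisymm (by omega) (F4 y hyC)
          obtain ⟨q, hq⟩ := hxA
          refine Or.inl ⟨hyC, q.concat hadj, ?_⟩
          intro z hz
          rw [SimpleGraph.Walk.support_concat] at hz
          simp only [List.concat_eq_append, List.mem_append, List.mem_singleton] at hz
          rcases hz with hz | hz
          · exact hq z hz
          · exact hz ▸ hym
      · exact (KLem x hxK).trans (degOn_mono_set G Set.subset_union_right x)
    have : m + 1 ≤ coreness G w := le_coreness G w (Or.inl ⟨hwC, hwA⟩) TLem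
    omega
  rcases key with hu' | hv'
  · obtain ⟨q, hq⟩ := hu'
    have hum : coreness G u = m := hq u q.end_mem_support
    refine Or.inl ⟨q.reverse.bypass, q.reverse.bypass_isPath, fun x hx => ?_⟩
    have hx' : x ∈ q.support := by
      have := q.reverse.support_bypass_subset hx
      rwa [SimpleGraph.Walk.support_reverse, List.mem_reverse] at this
    rw [hq x hx', hum]
  · obtain ⟨q, hq⟩ := hv'
    have hvm : coreness G v = m := hq v q.end_mem_support
    refine Or.inr ⟨q.reverse.bypass, q.reverse.bypass_isPath, fun x hx => ?_⟩
    have hx' : x ∈ q.support := by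
      have := q.reverse.support_bypass_subset hx
      rwa [SimpleGraph.Walk.support_reverse, List.mem_reverse] at this
    rw [hq x hx', hk, hvm]
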